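/- Let Φ : ℝ → ℝ be twice continuously differentiable with (Φ(τ), Φ'(τ)) ≠ (0,0) for all τ, satisfying Φ''(τ) + √(24π)·√(Φ'(τ)² + Φ(τ)²)·Φ'(τ) + Φ(τ) = 0 for all τ. Then the function h(τ) = √(8π/3)·√(Φ'(τ)² + Φ(τ)²) is differentiable with h'(τ) = −8π·Φ'(τ)² for all τ; in particular h is monotonically nonincreasing. -/

import Mathlib

open Real

/-- Along nontrivial solutions of the rescaled Einstein–Klein–Gordon system the
normalized Hubble constant `h = √(8π/3)·√(Φ'² + Φ²)` satisfies `h' = −8πΦ'²`,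
hence is nonincreasing. -/
theorem hubble_nonincreasing
    (Φ : ℝ → ℝ) (hΦ : ContDiff ℝ 2 Φ)
    (hne : ∀ τ : ℝ, (Φ τ, deriv Φ τ) ≠ ((0 : ℝ), (0 : ℝ)))
    (heq : ∀ τ : ℝ, deriv (deriv Φ) τ
      + Real.sqrt (24 * Real.pi) * Real.sqrt ((deriv Φ τ) ^ 2 + (Φ τ) ^ 2) * deriv Φ τ
      + Φ τ = 0) :
    (∀ τ : ℝ,
      HasDerivAt (fun τ' => Real.sqrt (8 * Real.pi / 3)
        * Real.sqrt ((deriv Φ τ') ^ 2 + (Φ τ') ^ 2))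
        (-8 * Real.pi * (deriv Φ τ) ^ 2) τ) ∧
    Antitone (fun τ => Real.sqrt (8 * Real.pi / 3)
      * Real.sqrt ((deriv Φ τ) ^ 2 + (Φ τ) ^ 2)) := by
  have hΦ1 : Differentiable ℝ Φ := hΦ.differentiable (by norm_num)
  have hΦ' : Differentiable ℝ (deriv Φ) :=
    (hΦ.iterate_deriv' 1 1).differentiable (by norm_num)
  have key : ∀ τ : ℝ,
      HasDerivAt (fun τ' => Real.sqrt (8 * Real.pi / 3)
        * Real.sqrt ((deriv Φ τ') ^ 2 + (Φ τ') ^ 2))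
        (-8 * Real.pi * (deriv Φ τ) ^ 2) τ := by
    intro τ
    set u := deriv Φ τ with hu
    set u' := deriv (deriv Φ) τ with hu'
    have hEpos : 0 < u ^ 2 + (Φ τ) ^ 2 := by
      rcases eq_or_ne u 0 with h0 | h0
      · have hΦne : Φ τ ≠ 0 := by
          intro h; exact hne τ (by simp [h, ← hu, h0])
        have h2 : 0 < (Φ τ) ^ 2 := by positivity
        nlinarith [sq_nonneg u]
      · have h2 : 0 < u ^ 2 := by positivity
        nlinarith [sq_nonneg (Φ τ)]
    have hE : HasDerivAt (fun τ' => (deriv Φ τ') ^ 2 + (Φ τ') ^ 2)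
        (2 * u * u' + 2 * (Φ τ) * u) τ := by
      have h1 : HasDerivAt (deriv Φ) u' τ := (hΦ' τ).hasDerivAt
      have h2 : HasDerivAt Φ u τ := (hΦ1 τ).hasDerivAt
      have := (h1.pow 2).add (h2.pow 2)
      refine this.congr_deriv ?_
      ring
    have hsq := (Real.hasDerivAt_sqrt (ne_of_gt hEpos)).comp τ hE
    have := hsq.const_mul (Real.sqrt (8 * Real.pi / 3))
    refine this.congr_deriv (Eq.symm ?_)
    have hS : Real.sqrt (u ^ 2 + (Φ τ) ^ 2) > 0 := Real.sqrt_pos.mpr hEpos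
    have heqτ := heq τ
    have hu'eq : u' = -(Real.sqrt (24 * Real.pi) * Real.sqrt (u ^ 2 + (Φ τ) ^ 2) * u) - Φ τ := by
      rw [hu', hu]; linarith [heqτ]
    rw [hu'eq]
    have hnum : 2 * u * (-(Real.sqrt (24 * Real.pi) * Real.sqrt (u ^ 2 + (Φ τ) ^ 2) * u) - Φ τ)
        + 2 * (Φ τ) * u = -2 * Real.sqrt (24 * Real.pi) * Real.sqrt (u ^ 2 + (Φ τ) ^ 2) * u ^ 2 := by
      ring
    rw [hnum]
    have hprod : Real.sqrt (8 * Real.pi / 3) * Real.sqrt (24 * Real.pi) = 8 * Real.pi := by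
      rw [← Real.sqrt_mul (by positivity)]
      rw [show (8 * Real.pi / 3) * (24 * Real.pi) = (8 * Real.pi) ^ 2 by ring]
      exact Real.sqrt_sq (by positivity)
    have hsimp : 1 / (2 * Real.sqrt (u ^ 2 + (Φ τ) ^ 2))
        * (-2 * Real.sqrt (24 * Real.pi) * Real.sqrt (u ^ 2 + (Φ τ) ^ 2) * u ^ 2)
        = -Real.sqrt (24 * Real.pi) * u ^ 2 := by
      field_simp
    rw [hsimp]
    linear_combination (u ^ 2) * hprod
  refine ⟨key, ?_⟩
  apply antitone_of_deriv_nonpos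
  · exact fun τ => (key τ).differentiableAt
  · intro τ
    rw [(key τ).deriv]
    nlinarith [sq_nonneg (deriv Φ τ), Real.pi_pos]
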